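/- arXiv:1407.0887 — 2 statements merged into one kernel-verified Lean document; each statement's English description precedes it below -/
import Mathlib

section
/- For p > 0 and u > 0 define the stability predicate S(p,u) := [ u ≤ (1 − p u)² and (1 − p u)² ≤ 1 ] or [ u > (1 − p u)² and u · e^{(1 − p u)²/u − 1} ≤ 1 ]. If p ≥ 2, then for every u > 0, S(p,u) holds if and only if u ≤ 2/p. Consequently, for the pseudo-explicit Euler scheme with linear driver f(y,z) = a y + Σ b_ℓ z^ℓ, a < 0, b ≠ 0, if −a/|b|_∞² ≥ 2 then the scheme is Von Neumann stable if and only if h ≤ −2/a. -/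
/-- For `b ∈ ℝ^d`, `|b|_∞ := max(|b⁺|, |b⁻|)` where `b⁺ = (b₁ ∨ 0, …, b_d ∨ 0)`,
`b⁻ = (b₁ ∧ 0, …, b_d ∧ 0)` and `|·|` is the Euclidean norm. -/
noncomputable def bInfty {d : ℕ} (b : Fin d → ℝ) : ℝ :=
  max (Real.sqrt (∑ ℓ, max (b ℓ) 0 ^ 2)) (Real.sqrt (∑ ℓ, min (b ℓ) 0 ^ 2))

/-- The Von Neumann stability predicate of the pseudo-explicit Euler scheme in the
variables `p = -a/|b|_∞²`, `u = |b|_∞² h` (note `(1 + a h)² = (1 - p u)²`). -/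
noncomputable def SpredVN (p u : ℝ) : Prop :=
  (u ≤ (1 - p * u) ^ 2 ∧ (1 - p * u) ^ 2 ≤ 1) ∨
    ((1 - p * u) ^ 2 < u ∧ u * Real.exp ((1 - p * u) ^ 2 / u - 1) ≤ 1)

/-- Cauchy–Schwarz type bound: `(∑ bℓ √xℓ)² ≤ |b|_∞² ∑ xℓ`. -/
lemma key_CS {d : ℕ} (b : Fin d → ℝ) (x : Fin d → ℝ) (hx : ∀ ℓ, 0 ≤ x ℓ) :
    (∑ ℓ, b ℓ * Real.sqrt (x ℓ)) ^ 2 ≤ bInfty b ^ 2 * ∑ ℓ, x ℓ := by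
  set T := ∑ ℓ, b ℓ * Real.sqrt (x ℓ) with hT
  have hplus : Real.sqrt (∑ ℓ, max (b ℓ) 0 ^ 2) ^ 2 ≤ bInfty b ^ 2 :=
    pow_le_pow_left₀ (Real.sqrt_nonneg _) (le_max_left _ _) 2
  have hminus : Real.sqrt (∑ ℓ, min (b ℓ) 0 ^ 2) ^ 2 ≤ bInfty b ^ 2 :=
    pow_le_pow_left₀ (Real.sqrt_nonneg _) (le_max_right _ _) 2
  have hsq1 : Real.sqrt (∑ ℓ, max (b ℓ) 0 ^ 2) ^ 2 = ∑ ℓ, max (b ℓ) 0 ^ 2 :=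
    Real.sq_sqrt (Finset.sum_nonneg fun _ _ => sq_nonneg _)
  have hsq2 : Real.sqrt (∑ ℓ, min (b ℓ) 0 ^ 2) ^ 2 = ∑ ℓ, min (b ℓ) 0 ^ 2 :=
    Real.sq_sqrt (Finset.sum_nonneg fun _ _ => sq_nonneg _)
  have hxsum : ∀ ℓ ∈ Finset.univ, Real.sqrt (x ℓ) ^ 2 = x ℓ :=
    fun ℓ _ => Real.sq_sqrt (hx ℓ)
  rcases le_or_gt 0 T with h0 | h0
  · have h1 : T ≤ ∑ ℓ, max (b ℓ) 0 * Real.sqrt (x ℓ) := by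
      apply Finset.sum_le_sum
      intro i _
      exact mul_le_mul_of_nonneg_right (le_max_left _ _) (Real.sqrt_nonneg _)
    have h2 : (∑ ℓ, max (b ℓ) 0 * Real.sqrt (x ℓ)) ^ 2 ≤
        (∑ ℓ, max (b ℓ) 0 ^ 2) * ∑ ℓ, x ℓ := by
      calc (∑ ℓ, max (b ℓ) 0 * Real.sqrt (x ℓ)) ^ 2
          ≤ (∑ ℓ, max (b ℓ) 0 ^ 2) * ∑ ℓ, Real.sqrt (x ℓ) ^ 2 :=
            Finset.sum_mul_sq_le_sq_mul_sq _ _ _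
        _ = (∑ ℓ, max (b ℓ) 0 ^ 2) * ∑ ℓ, x ℓ := by rw [Finset.sum_congr rfl hxsum]
    have hTsq : T ^ 2 ≤ (∑ ℓ, max (b ℓ) 0 ^ 2) * ∑ ℓ, x ℓ :=
      le_trans (pow_le_pow_left₀ h0 h1 2) h2
    have hsum : (∑ ℓ, max (b ℓ) 0 ^ 2) ≤ bInfty b ^ 2 := hsq1 ▸ hplus
    have hs0 : 0 ≤ ∑ ℓ, x ℓ := Finset.sum_nonneg fun ℓ _ => hx ℓ
    calc T ^ 2 ≤ (∑ ℓ, max (b ℓ) 0 ^ 2) * ∑ ℓ, x ℓ := hTsq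
      _ ≤ bInfty b ^ 2 * ∑ ℓ, x ℓ := mul_le_mul_of_nonneg_right hsum hs0
  · have h1 : -T ≤ ∑ ℓ, -min (b ℓ) 0 * Real.sqrt (x ℓ) := by
      rw [hT, ← Finset.sum_neg_distrib]
      apply Finset.sum_le_sum
      intro i _
      rw [← neg_mul]
      exact mul_le_mul_of_nonneg_right (neg_le_neg (min_le_left _ _)) (Real.sqrt_nonneg _)
    have h2 : (∑ ℓ, -min (b ℓ) 0 * Real.sqrt (x ℓ)) ^ 2 ≤
        (∑ ℓ, min (b ℓ) 0 ^ 2) * ∑ ℓ, x ℓ := by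
      calc (∑ ℓ, -min (b ℓ) 0 * Real.sqrt (x ℓ)) ^ 2
          ≤ (∑ ℓ, (-min (b ℓ) 0) ^ 2) * ∑ ℓ, Real.sqrt (x ℓ) ^ 2 :=
            Finset.sum_mul_sq_le_sq_mul_sq _ _ _
        _ = (∑ ℓ, min (b ℓ) 0 ^ 2) * ∑ ℓ, x ℓ := by
            rw [Finset.sum_congr rfl hxsum]; simp [neg_pow]
    have hTsq : T ^ 2 ≤ (∑ ℓ, min (b ℓ) 0 ^ 2) * ∑ ℓ, x ℓ := by
      have := pow_le_pow_left₀ (by linarith : (0:ℝ) ≤ -T) h1 2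
      rw [neg_pow] at this
      simpa using le_trans this h2
    have hsum : (∑ ℓ, min (b ℓ) 0 ^ 2) ≤ bInfty b ^ 2 := hsq2 ▸ hminus
    have hs0 : 0 ≤ ∑ ℓ, x ℓ := Finset.sum_nonneg fun ℓ _ => hx ℓ
    calc T ^ 2 ≤ (∑ ℓ, min (b ℓ) 0 ^ 2) * ∑ ℓ, x ℓ := hTsq
      _ ≤ bInfty b ^ 2 * ∑ ℓ, x ℓ := mul_le_mul_of_nonneg_right hsum hs0

/-- For `p ≥ 2` the Von Neumann stability predicate of the pseudo-explicit scheme holds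
exactly for `u ≤ 2/p`; consequently, for the linear driver `f(y,z) = a y + Σ b_ℓ z^ℓ`
with `a < 0`, `b ≠ 0` and `−a/|b|_∞² ≥ 2`, the pseudo-explicit Euler scheme is
Von Neumann stable if and only if `h ≤ −2/a`. -/
theorem von_neumann_pseudo_explicit_large_p :
    (∀ p : ℝ, 2 ≤ p → ∀ u : ℝ, 0 < u → (SpredVN p u ↔ u ≤ 2 / p)) ∧
    (∀ (d : ℕ) (a : ℝ) (b : Fin d → ℝ) (h : ℝ), 1 ≤ d → a < 0 → b ≠ 0 → 0 < h →
      2 ≤ -a / bInfty b ^ 2 →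
      ((∀ x : Fin d → ℝ, (∀ ℓ, 0 ≤ x ℓ) →
          Real.exp (-∑ ℓ, x ℓ) *
            ((1 + a * h) ^ 2 + h * (∑ ℓ, b ℓ * Real.sqrt (x ℓ)) ^ 2) ≤ 1)
        ↔ h ≤ -2 / a)) := by
  constructor
  · -- Part 1
    intro p hp u hu
    have hp0 : (0:ℝ) < p := lt_of_lt_of_le two_pos hp
    constructor
    · intro hS
      by_contra hgt
      push_neg at hgt
      have hpu : 2 < p * u := by
        rw [div_lt_iff₀ hp0] at hgt; linarith [mul_comm u p]
      have hc : 1 < (1 - p * u) ^ 2 := by nlinarith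
      rcases hS with ⟨h1, h2⟩ | ⟨h1, h2⟩
      · linarith
      · have hkey : (1 - p * u) ^ 2 ≤ u * Real.exp ((1 - p * u) ^ 2 / u - 1) := by
          have he := Real.add_one_le_exp ((1 - p * u) ^ 2 / u - 1)
          have h3 : (1 - p * u) ^ 2 / u ≤ Real.exp ((1 - p * u) ^ 2 / u - 1) := by
            linarith
          calc (1 - p * u) ^ 2 = u * ((1 - p * u) ^ 2 / u) := by field_simp
            _ ≤ u * Real.exp ((1 - p * u) ^ 2 / u - 1) :=
                mul_le_mul_of_nonneg_left h3 hu.le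
        linarith
    · intro hle
      have hpu : p * u ≤ 2 := by
        rw [le_div_iff₀ hp0] at hle; linarith [mul_comm u p]
      have hpu0 : 0 ≤ p * u := le_of_lt (mul_pos hp0 hu)
      have hc1 : (1 - p * u) ^ 2 ≤ 1 := by nlinarith
      have hu1 : u ≤ 1 := by nlinarith
      rcases le_or_gt u ((1 - p * u) ^ 2) with h1 | h1
      · exact Or.inl ⟨h1, hc1⟩
      · refine Or.inr ⟨h1, ?_⟩
        have hlog : Real.log u ≤ 0 := Real.log_nonpos hu.le hu1
        have hcu : (1 - p * u) ^ 2 / u ≤ 1 := (div_le_one hu).mpr h1.le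
        have harg : (1 - p * u) ^ 2 / u - 1 ≤ -Real.log u := by linarith
        calc u * Real.exp ((1 - p * u) ^ 2 / u - 1)
            ≤ u * Real.exp (-Real.log u) :=
              mul_le_mul_of_nonneg_left (Real.exp_le_exp.mpr harg) hu.le
          _ = 1 := by
              rw [Real.exp_neg, Real.exp_log hu]
              field_simp
  · -- Part 2
    intro d a b h _hd ha _hb hh hp
    have hB0 : 0 ≤ bInfty b := le_trans (Real.sqrt_nonneg _) (le_max_left _ _)
    have hBpos : 0 < bInfty b ^ 2 := by
      rcases lt_or_eq_of_le hB0 with h' | h'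
      · positivity
      · exfalso; rw [← h'] at hp; norm_num at hp
    have hBa : 2 * bInfty b ^ 2 ≤ -a := by
      rw [le_div_iff₀ hBpos] at hp; linarith
    constructor
    · intro hall
      have h0 := hall 0 (fun _ => le_refl 0)
      simp [Real.sqrt_zero] at h0
      rw [le_div_iff_of_neg ha]
      rcases abs_le.mp h0 with ⟨h1, _⟩
      nlinarith
    · intro hle x hx
      rw [le_div_iff_of_neg ha] at hle
      have hs0 : 0 ≤ ∑ ℓ, x ℓ := Finset.sum_nonneg fun ℓ _ => hx ℓ
      have hCS := key_CS b x hx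
      have hc1 : (1 + a * h) ^ 2 ≤ 1 := by
        have h1 : 0 ≤ h * a + 2 := by linarith
        have h2 : 0 ≤ -(h * a) := by nlinarith
        nlinarith [mul_nonneg h1 h2]
      have hhB : h * bInfty b ^ 2 ≤ 1 := by
        nlinarith [mul_le_mul_of_nonneg_left hBa hh.le]
      set s := ∑ ℓ, x ℓ with hsdef
      have hmain : (1 + a * h) ^ 2 + h * (∑ ℓ, b ℓ * Real.sqrt (x ℓ)) ^ 2 ≤ 1 + s := by
        have h1 : h * (∑ ℓ, b ℓ * Real.sqrt (x ℓ)) ^ 2 ≤ h * (bInfty b ^ 2 * s) :=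
          mul_le_mul_of_nonneg_left hCS hh.le
        have h2 : h * (bInfty b ^ 2 * s) ≤ s := by
          nlinarith [mul_le_mul_of_nonneg_right hhB hs0]
        linarith
      have hexp : s + 1 ≤ Real.exp s := Real.add_one_le_exp s
      calc Real.exp (-s) * ((1 + a * h) ^ 2 + h * (∑ ℓ, b ℓ * Real.sqrt (x ℓ)) ^ 2)
          ≤ Real.exp (-s) * (1 + s) :=
            mul_le_mul_of_nonneg_left hmain (Real.exp_pos _).le
        _ ≤ Real.exp (-s) * Real.exp s :=
            mul_le_mul_of_nonneg_left (by linarith) (Real.exp_pos _).le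
        _ = 1 := by rw [← Real.exp_add]; simp
end

section
/- For p > 0 and u > 0 define the stability predicate S(p,u) := [ u ≤ (1 − p u)² and (1 − p u)² ≤ 1 ] or [ u > (1 − p u)² and u · e^{(1 − p u)²/u − 1} ≤ 1 ]. If 0 < p < 2, then there exists ū ∈ [1, 2/p) such that: (i) for every u > 0, S(p,u) holds if and only if u ≤ ū; (ii) ū satisfies ū · e^{(1 − p ū)²/ū − 1} = 1, and it is the unique solution of this equation in the interval where u > (1 − p u)². Consequently, for the pseudo-explicit Euler scheme with linear driver f(y,z) = a y + Σ b_ℓ z^ℓ, a ≤ 0, b ≠ 0 and −a/|b|_∞² < 2, there exists h̄ ∈ [1/|b|_∞², −2/a) (with −2/a := +∞ if a = 0) such that the scheme is Von Neumann stable if and only if h ≤ h̄. -/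
open Real Finset

noncomputable def gf (p u : ℝ) : ℝ := Real.log u + 1 / u + p ^ 2 * u - 2 * p - 1

lemma gf_eq (p u : ℝ) (hu : 0 < u) :
    Real.log u + ((1 - p * u) ^ 2 / u - 1) = gf p u := by
  unfold gf; field_simp; ring

lemma phi_eq (p u : ℝ) (hu : 0 < u) :
    u * Real.exp ((1 - p * u) ^ 2 / u - 1) = Real.exp (gf p u) := by
  rw [← gf_eq p u hu, Real.exp_add, Real.exp_log hu]

lemma gf_hasDeriv (p x : ℝ) (hx0 : x ≠ 0) :
    HasDerivAt (gf p) (x⁻¹ - (x ^ 2)⁻¹ + p ^ 2) x := by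
  have h1 : HasDerivAt Real.log x⁻¹ x := Real.hasDerivAt_log hx0
  have h2 : HasDerivAt (fun u : ℝ => 1 / u) (-(x ^ 2)⁻¹) x := by
    simpa [one_div] using hasDerivAt_inv hx0
  have h3 : HasDerivAt (fun u : ℝ => p ^ 2 * u) (p ^ 2) x := by
    simpa using (hasDerivAt_id x).const_mul (p ^ 2)
  have h4 := (((h1.add h2).add h3).sub_const (2 * p)).sub_const 1
  have e : gf p = fun y => (((Real.log + fun u : ℝ => 1 / u) + fun u : ℝ => p ^ 2 * u) : ℝ → ℝ) y - 2 * p - 1 := by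
    funext u; simp only [gf, Pi.add_apply]
  rw [e]; exact h4.congr_deriv (by ring)

lemma gf_strictMono (p : ℝ) : StrictMonoOn (gf p) (Set.Ici 1) := by
  apply strictMonoOn_of_deriv_pos (convex_Ici 1)
  · intro x hx
    have hx0 : x ≠ 0 := by have : (1:ℝ) ≤ x := hx; intro h; rw [h] at this; linarith
    exact (gf_hasDeriv p x hx0).continuousAt.continuousWithinAt
  · intro x hx
    rw [interior_Ici] at hx
    have hx1 : (1:ℝ) < x := hx
    have hx0 : (0:ℝ) < x := by linarith
    rw [(gf_hasDeriv p x hx0.ne').deriv]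
    have h : (x ^ 2)⁻¹ < x⁻¹ := by
      apply inv_strictAnti₀ hx0
      nlinarith
    nlinarith [sq_nonneg p]

lemma gf_neg_of_region (p u : ℝ) (hu : 0 < u) (hu1 : u ≤ 1)
    (hreg : (1 - p * u) ^ 2 < u) : gf p u < 0 := by
  have h1 : (1 - p * u) ^ 2 / u < 1 := (div_lt_one hu).2 hreg
  have h2 : Real.log u ≤ 0 := Real.log_nonpos hu.le hu1
  have := gf_eq p u hu
  linarith

lemma sq_le_one_iff_le (p u : ℝ) (hp : 0 < p) (hu : 0 < u) :
    (1 - p * u) ^ 2 ≤ 1 ↔ u ≤ 2 / p := by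
  rw [le_div_iff₀ hp]
  constructor
  · intro h; nlinarith [mul_pos hp hu]
  · intro h; nlinarith [mul_pos hp hu]

lemma part1 (p : ℝ) (hp : 0 < p) (hp2 : p < 2) :
    ∃ ub : ℝ, 1 ≤ ub ∧ ub < 2 / p ∧
      (∀ u : ℝ, 0 < u → (SpredVN p u ↔ u ≤ ub)) ∧
      ub * Real.exp ((1 - p * ub) ^ 2 / ub - 1) = 1 ∧
      ∀ u : ℝ, 0 < u → (1 - p * u) ^ 2 < u →
        u * Real.exp ((1 - p * u) ^ 2 / u - 1) = 1 → u = ub := by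
  have h2p : (1:ℝ) < 2 / p := (one_lt_div hp).2 hp2
  have hg1 : gf p 1 < 0 := by
    have h : gf p 1 = p ^ 2 - 2 * p := by unfold gf; rw [Real.log_one]; ring
    nlinarith
  have hg2p : 0 < gf p (2 / p) := by
    have hp2pos : (0:ℝ) < p / 2 := by positivity
    have hne : p / 2 ≠ 1 := by intro h; rw [div_eq_one_iff_eq two_ne_zero] at h; linarith
    have hlog : Real.log (p / 2) < p / 2 - 1 := Real.log_lt_sub_one_of_pos hp2pos hne
    have hlog2 : Real.log (2 / p) = -Real.log (p / 2) := by
      rw [← Real.log_inv]; congr 1; field_simp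
    have h : gf p (2 / p) = Real.log (2 / p) + p / 2 - 1 := by
      unfold gf; field_simp; ring
    rw [h, hlog2]; linarith
  have hcont : ContinuousOn (gf p) (Set.Icc 1 (2 / p)) := by
    intro x hx
    have hx0 : x ≠ 0 := by have := hx.1; intro h; rw [h] at this; linarith
    exact (gf_hasDeriv p x hx0).continuousAt.continuousWithinAt
  obtain ⟨ub, hubmem, hubroot⟩ :=
    intermediate_value_Icc h2p.le hcont ⟨hg1.le, hg2p.le⟩
  obtain ⟨hub1, hub2⟩ := hubmem
  have hub1' : 1 < ub := by
    rcases lt_or_eq_of_le hub1 with h | h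
    · exact h
    · exfalso; rw [← h] at hubroot; linarith
  have hub2' : ub < 2 / p := by
    rcases lt_or_eq_of_le hub2 with h | h
    · exact h
    · exfalso; rw [h] at hubroot; linarith
  have hubpos : 0 < ub := by linarith
  have hmono := gf_strictMono p
  -- ub is in the region
  have hubreg : (1 - p * ub) ^ 2 < ub := by
    have hlog : 0 < Real.log ub := Real.log_pos hub1'
    have heq := gf_eq p ub hubpos
    rw [hubroot] at heq
    have : (1 - p * ub) ^ 2 / ub < 1 := by linarith
    exact (div_lt_one hubpos).1 this
  refine ⟨ub, hub1'.le, hub2', ?_, ?_, ?_⟩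
  · intro u hu
    constructor
    · -- S → u ≤ ub
      intro hS
      by_contra hgt
      push_neg at hgt
      have hu1 : (1:ℝ) ≤ u := by linarith
      have hgu : 0 < gf p u := by
        have := hmono (Set.mem_Ici.2 hub1'.le) (Set.mem_Ici.2 hu1) hgt
        linarith [hubroot ▸ this]
      rcases hS with ⟨h1, h2⟩ | ⟨h1, h2⟩
      · -- region A : u ≤ (1-pu)^2 ≤ 1 forces u ≤ 1 < ub
        have : u ≤ 1 := le_trans h1 h2
        linarith
      · rw [phi_eq p u hu] at h2
        have := Real.exp_le_one_iff.1 h2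
        linarith
    · -- u ≤ ub → S
      intro hle
      rcases lt_or_ge ((1 - p * u) ^ 2) u with hreg | hreg
      · right
        refine ⟨hreg, ?_⟩
        rw [phi_eq p u hu, Real.exp_le_one_iff]
        rcases le_or_gt u 1 with h1 | h1
        · exact (gf_neg_of_region p u hu h1 hreg).le
        · have := hmono.monotoneOn (Set.mem_Ici.2 h1.le) (Set.mem_Ici.2 hub1'.le) hle
          linarith
      · left
        refine ⟨hreg, ?_⟩
        rw [sq_le_one_iff_le p u hp hu]
        linarith
  · rw [phi_eq p ub hubpos, hubroot, Real.exp_zero]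
  · intro u hu hreg hroot
    rw [phi_eq p u hu, Real.exp_eq_one_iff] at hroot
    rcases le_or_gt u 1 with h1 | h1
    · exact absurd hroot (gf_neg_of_region p u hu h1 hreg).ne
    · exact hmono.injOn (Set.mem_Ici.2 h1.le) (Set.mem_Ici.2 hub1'.le)
        (hroot.trans hubroot.symm)

lemma scalarL (c u : ℝ) (hc : 0 ≤ c) (hu : 0 < u) :
    (∀ s : ℝ, 0 ≤ s → c + u * s ≤ Real.exp s) ↔
      ((u ≤ c ∧ c ≤ 1) ∨ (c < u ∧ u * Real.exp (c / u - 1) ≤ 1)) := by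
  constructor
  · intro H
    rcases le_or_gt u c with h | h
    · left
      refine ⟨h, ?_⟩
      have := H 0 le_rfl
      simpa using this
    · right
      refine ⟨h, ?_⟩
      have hcu : c / u < 1 := (div_lt_one hu).2 h
      have hs : 0 ≤ 1 - c / u := by linarith
      have h2 := H (1 - c / u) hs
      have h1 : c + u * (1 - c / u) = u := by field_simp; ring
      rw [h1] at h2
      calc u * Real.exp (c / u - 1)
          ≤ Real.exp (1 - c / u) * Real.exp (c / u - 1) := by
            apply mul_le_mul_of_nonneg_right h2 (Real.exp_pos _).le
        _ = 1 := by rw [← Real.exp_add]; norm_num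
  · rintro (⟨h1, h2⟩ | ⟨h1, h2⟩) s hs
    · have := Real.add_one_le_exp s
      nlinarith
    · have hu' : u ≤ Real.exp (1 - c / u) := by
        have hpos := Real.exp_pos (c / u - 1)
        have key : Real.exp (1 - c / u) * Real.exp (c / u - 1) = 1 := by
          rw [← Real.exp_add]; norm_num
        nlinarith
      have hcu : 0 ≤ c / u := div_nonneg hc hu.le
      have h3 : Real.exp (1 - c / u) * (1 + (s - (1 - c / u))) ≤ Real.exp s := by
        have h4 := Real.add_one_le_exp (s - (1 - c / u))
        calc Real.exp (1 - c / u) * (1 + (s - (1 - c / u)))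
            ≤ Real.exp (1 - c / u) * Real.exp (s - (1 - c / u)) := by
              apply mul_le_mul_of_nonneg_left (by linarith) (Real.exp_pos _).le
          _ = Real.exp s := by rw [← Real.exp_add]; ring_nf
      have h5 : c + u * s = u * (s + c / u) := by field_simp; ring
      have h6 : u * (s + c / u) ≤ Real.exp (1 - c / u) * (s + c / u) :=
        mul_le_mul_of_nonneg_right hu' (by linarith)
      have h7 : Real.exp (1 - c / u) * (s + c / u) =
          Real.exp (1 - c / u) * (1 + (s - (1 - c / u))) := by ring
      linarith [h5 ▸ (h6.trans (h7 ▸ h3))]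
  
lemma sum_sqrt_le {d : ℕ} (c x : Fin d → ℝ) (hx : ∀ ℓ, 0 ≤ x ℓ) :
    ∑ ℓ, c ℓ * Real.sqrt (x ℓ) ≤ Real.sqrt (∑ ℓ, c ℓ ^ 2) * Real.sqrt (∑ ℓ, x ℓ) := by
  have := Real.sum_mul_le_sqrt_mul_sqrt Finset.univ c (fun ℓ => Real.sqrt (x ℓ))
  simpa [Real.sq_sqrt (hx _)] using this

lemma cs_bound {d : ℕ} (b x : Fin d → ℝ) (hx : ∀ ℓ, 0 ≤ x ℓ) :
    (∑ ℓ, b ℓ * Real.sqrt (x ℓ)) ^ 2 ≤ bInfty b ^ 2 * ∑ ℓ, x ℓ := by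
  set s := ∑ ℓ, x ℓ with hs
  have hs0 : 0 ≤ s := Finset.sum_nonneg fun ℓ _ => hx ℓ
  set B := bInfty b with hB
  have hB0 : 0 ≤ B := le_trans (Real.sqrt_nonneg _) (le_max_left _ _)
  have hup : ∑ ℓ, b ℓ * Real.sqrt (x ℓ) ≤ B * Real.sqrt s := by
    calc ∑ ℓ, b ℓ * Real.sqrt (x ℓ)
        ≤ ∑ ℓ, max (b ℓ) 0 * Real.sqrt (x ℓ) := by
          apply Finset.sum_le_sum
          intro ℓ _
          exact mul_le_mul_of_nonneg_right (le_max_left _ _) (Real.sqrt_nonneg _)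
      _ ≤ Real.sqrt (∑ ℓ, max (b ℓ) 0 ^ 2) * Real.sqrt s :=
          sum_sqrt_le _ x hx
      _ ≤ B * Real.sqrt s := by
          apply mul_le_mul_of_nonneg_right (le_max_left _ _) (Real.sqrt_nonneg _)
  have hlow : -(B * Real.sqrt s) ≤ ∑ ℓ, b ℓ * Real.sqrt (x ℓ) := by
    have : -∑ ℓ, b ℓ * Real.sqrt (x ℓ) ≤ B * Real.sqrt s := by
      calc -∑ ℓ, b ℓ * Real.sqrt (x ℓ)
          = ∑ ℓ, (-min (b ℓ) 0 + (min (b ℓ) 0 - b ℓ)) * Real.sqrt (x ℓ) := by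
            rw [← Finset.sum_neg_distrib]
            apply Finset.sum_congr rfl
            intro ℓ _; ring
        _ ≤ ∑ ℓ, -min (b ℓ) 0 * Real.sqrt (x ℓ) := by
            apply Finset.sum_le_sum
            intro ℓ _
            have h1 : min (b ℓ) 0 - b ℓ ≤ 0 := by
              have := min_le_left (b ℓ) 0; linarith
            nlinarith [Real.sqrt_nonneg (x ℓ)]
        _ ≤ Real.sqrt (∑ ℓ, (-min (b ℓ) 0) ^ 2) * Real.sqrt s :=
            sum_sqrt_le _ x hx
        _ = Real.sqrt (∑ ℓ, min (b ℓ) 0 ^ 2) * Real.sqrt s := by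
            congr 1
            apply congrArg
            apply Finset.sum_congr rfl
            intro ℓ _; ring
        _ ≤ B * Real.sqrt s := by
            apply mul_le_mul_of_nonneg_right (le_max_right _ _) (Real.sqrt_nonneg _)
    linarith
  have := sq_le_sq' hlow hup
  calc (∑ ℓ, b ℓ * Real.sqrt (x ℓ)) ^ 2 ≤ (B * Real.sqrt s) ^ 2 := this
    _ = B ^ 2 * s := by rw [mul_pow, Real.sq_sqrt hs0]

lemma bInfty_pos {d : ℕ} (b : Fin d → ℝ) (hb : b ≠ 0) : 0 < bInfty b := by
  obtain ⟨ℓ, hℓ⟩ : ∃ ℓ, b ℓ ≠ 0 := by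
    by_contra h
    push_neg at h
    exact hb (funext h)
  rcases lt_or_gt_of_ne hℓ with h | h
  · have h1 : 0 < min (b ℓ) 0 ^ 2 := by
      have : min (b ℓ) 0 = b ℓ := min_eq_left h.le
      rw [this]; positivity
    have h2 : 0 < ∑ j, min (b j) 0 ^ 2 := by
      refine Finset.sum_pos' (fun j _ => sq_nonneg _) ⟨ℓ, Finset.mem_univ ℓ, ?_⟩
      exact h1
    exact lt_of_lt_of_le (Real.sqrt_pos.2 h2) (le_max_right _ _)
  · have h1 : 0 < max (b ℓ) 0 ^ 2 := by
      have : max (b ℓ) 0 = b ℓ := max_eq_left h.le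
      rw [this]; positivity
    have h2 : 0 < ∑ j, max (b j) 0 ^ 2 := by
      refine Finset.sum_pos' (fun j _ => sq_nonneg _) ⟨ℓ, Finset.mem_univ ℓ, ?_⟩
      exact h1
    exact lt_of_lt_of_le (Real.sqrt_pos.2 h2) (le_max_left _ _)

lemma attain_aux {d : ℕ} (b m : Fin d → ℝ) (hm : ∀ ℓ, 0 ≤ m ℓ) (e : ℝ)
    (hbm : ∀ ℓ, b ℓ * m ℓ = e * m ℓ ^ 2) (A : ℝ) (hA : A = ∑ ℓ, m ℓ ^ 2) (hA0 : 0 < A)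
    (s : ℝ) (hs : 0 ≤ s) :
    ∃ x : Fin d → ℝ, (∀ ℓ, 0 ≤ x ℓ) ∧ (∑ ℓ, x ℓ) = s ∧
      (∑ ℓ, b ℓ * Real.sqrt (x ℓ)) ^ 2 = e ^ 2 * A * s := by
  refine ⟨fun ℓ => m ℓ ^ 2 * s / A, fun ℓ => by positivity, ?_, ?_⟩
  · rw [← Finset.sum_div, ← Finset.sum_mul, ← hA]
    field_simp
  · have hsq : ∀ ℓ, Real.sqrt (m ℓ ^ 2 * s / A) = m ℓ * Real.sqrt s / Real.sqrt A := by
      intro ℓ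
      rw [Real.sqrt_div (by positivity), Real.sqrt_mul (sq_nonneg _), Real.sqrt_sq (hm ℓ)]
    have hT : (∑ ℓ, b ℓ * Real.sqrt (m ℓ ^ 2 * s / A)) =
        e * A * (Real.sqrt s / Real.sqrt A) := by
      calc (∑ ℓ, b ℓ * Real.sqrt (m ℓ ^ 2 * s / A))
          = ∑ ℓ, (b ℓ * m ℓ) * (Real.sqrt s / Real.sqrt A) := by
            apply Finset.sum_congr rfl
            intro ℓ _
            rw [hsq ℓ]; ring
        _ = (∑ ℓ, b ℓ * m ℓ) * (Real.sqrt s / Real.sqrt A) := by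
            rw [Finset.sum_mul]
        _ = e * A * (Real.sqrt s / Real.sqrt A) := by
            congr 1
            rw [hA, Finset.mul_sum]
            exact Finset.sum_congr rfl fun ℓ _ => hbm ℓ
    rw [hT]
    have hAs : Real.sqrt A ≠ 0 := by positivity
    rw [mul_pow, mul_pow, div_pow, Real.sq_sqrt hs, Real.sq_sqrt hA0.le]
    field_simp

lemma exists_attain {d : ℕ} (b : Fin d → ℝ) (hb : b ≠ 0) (s : ℝ) (hs : 0 ≤ s) :
    ∃ x : Fin d → ℝ, (∀ ℓ, 0 ≤ x ℓ) ∧ (∑ ℓ, x ℓ) = s ∧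
      (∑ ℓ, b ℓ * Real.sqrt (x ℓ)) ^ 2 = bInfty b ^ 2 * s := by
  have hBpos := bInfty_pos b hb
  rcases le_max_iff.1 (le_refl (bInfty b)) with hcase | hcase
  · -- B = sqrt (∑ max²)
    have hBeq : bInfty b = Real.sqrt (∑ ℓ, max (b ℓ) 0 ^ 2) :=
      le_antisymm hcase (le_max_left _ _)
    have hA0 : 0 < ∑ ℓ, max (b ℓ) 0 ^ 2 := by
      by_contra h
      push_neg at h
      have : Real.sqrt (∑ ℓ, max (b ℓ) 0 ^ 2) = 0 := by
        rcases lt_or_eq_of_le h with h' | h'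
        · exact Real.sqrt_eq_zero_of_nonpos h'.le
        · rw [h', Real.sqrt_zero]
      rw [hBeq, this] at hBpos; exact lt_irrefl _ hBpos
    obtain ⟨x, hx1, hx2, hx3⟩ := attain_aux b (fun ℓ => max (b ℓ) 0)
      (fun ℓ => le_max_right _ _) 1
      (fun ℓ => by rcases le_or_gt (b ℓ) 0 with h | h
                   · simp [max_eq_right h]
                   · simp [max_eq_left h.le]; ring)
      _ rfl hA0 s hs
    refine ⟨x, hx1, hx2, ?_⟩
    rw [hx3, hBeq, Real.sq_sqrt hA0.le]
    ring
  · -- B = sqrt (∑ min²)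
    have hBeq : bInfty b = Real.sqrt (∑ ℓ, min (b ℓ) 0 ^ 2) :=
      le_antisymm hcase (le_max_right _ _)
    have hA0 : 0 < ∑ ℓ, min (b ℓ) 0 ^ 2 := by
      by_contra h
      push_neg at h
      have : Real.sqrt (∑ ℓ, min (b ℓ) 0 ^ 2) = 0 := by
        rcases lt_or_eq_of_le h with h' | h'
        · exact Real.sqrt_eq_zero_of_nonpos h'.le
        · rw [h', Real.sqrt_zero]
      rw [hBeq, this] at hBpos; exact lt_irrefl _ hBpos
    obtain ⟨x, hx1, hx2, hx3⟩ := attain_aux b (fun ℓ => -min (b ℓ) 0)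
      (fun ℓ => by simp [min_le_right (b ℓ) 0])
      (-1)
      (fun ℓ => by rcases le_or_gt (b ℓ) 0 with h | h
                   · simp [min_eq_left h]; ring
                   · simp [min_eq_right h.le])
      _ rfl (by simpa using hA0) s hs
    refine ⟨x, hx1, hx2, ?_⟩
    rw [hx3, hBeq, Real.sq_sqrt hA0.le]
    simp

lemma spred_zero (u : ℝ) (hu : 0 < u) : SpredVN 0 u ↔ u ≤ 1 := by
  have hphi := phi_eq 0 u hu
  have hg1 : gf 0 1 = 0 := by unfold gf; norm_num
  constructor
  · rintro (⟨h1, _⟩ | ⟨h1, h2⟩)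
    · simpa using h1
    · by_contra hgt
      push_neg at hgt
      have hm := gf_strictMono 0 (Set.mem_Ici.2 le_rfl) (Set.mem_Ici.2 hgt.le) hgt
      rw [hg1] at hm
      rw [hphi] at h2
      have := Real.exp_le_one_iff.1 h2
      linarith
  · intro h
    left
    constructor
    · simpa using h
    · norm_num

/-- For `0 < p < 2` the Von Neumann stability region of the pseudo-explicit scheme in
the variable `u` is exactly `(0, ū]` for some `ū ∈ [1, 2/p)`, and `ū` is the unique
solution of `u e^{(1 - p u)²/u - 1} = 1` in the region where `u > (1 - p u)²`.
Consequently, for the linear driver `f(y,z) = a y + Σ b_ℓ z^ℓ` with `a ≤ 0`, `b ≠ 0` and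
`−a/|b|_∞² < 2`, there exists `h̄ ∈ [1/|b|_∞², −2/a)` (with `−2/a := +∞` when `a = 0`)
such that the scheme is Von Neumann stable if and only if `h ≤ h̄`. -/
theorem von_neumann_pseudo_explicit_small_p :
    (∀ p : ℝ, 0 < p → p < 2 →
      ∃ ub : ℝ, 1 ≤ ub ∧ ub < 2 / p ∧
        (∀ u : ℝ, 0 < u → (SpredVN p u ↔ u ≤ ub)) ∧
        ub * Real.exp ((1 - p * ub) ^ 2 / ub - 1) = 1 ∧
        ∀ u : ℝ, 0 < u → (1 - p * u) ^ 2 < u →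
          u * Real.exp ((1 - p * u) ^ 2 / u - 1) = 1 → u = ub) ∧
    (∀ (d : ℕ) (a : ℝ) (b : Fin d → ℝ), 1 ≤ d → a ≤ 0 → b ≠ 0 →
      -a / bInfty b ^ 2 < 2 →
      ∃ hbar : ℝ, 1 / bInfty b ^ 2 ≤ hbar ∧ (a < 0 → hbar < -2 / a) ∧
        ∀ h : ℝ, 0 < h →
          ((∀ x : Fin d → ℝ, (∀ ℓ, 0 ≤ x ℓ) →
              Real.exp (-∑ ℓ, x ℓ) *
                ((1 + a * h) ^ 2 + h * (∑ ℓ, b ℓ * Real.sqrt (x ℓ)) ^ 2) ≤ 1)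
            ↔ h ≤ hbar)) := by
  constructor
  · exact part1
  · intro d a b hd ha hb hlt
    set B := bInfty b with hBdef
    have hB : 0 < B := bInfty_pos b hb
    have hB2 : 0 < B ^ 2 := by positivity
    set p := -a / B ^ 2 with hpdef
    -- the bridge between the multidimensional condition and the scalar one
    have bridge : ∀ h : ℝ, 0 < h →
        ((∀ x : Fin d → ℝ, (∀ ℓ, 0 ≤ x ℓ) →
            Real.exp (-∑ ℓ, x ℓ) *
              ((1 + a * h) ^ 2 + h * (∑ ℓ, b ℓ * Real.sqrt (x ℓ)) ^ 2) ≤ 1) ↔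
          (∀ s : ℝ, 0 ≤ s → (1 + a * h) ^ 2 + (B ^ 2 * h) * s ≤ Real.exp s)) := by
      intro h hh
      constructor
      · intro H s hs
        obtain ⟨x, hx1, hx2, hx3⟩ := exists_attain b hb s hs
        have h1 := H x hx1
        rw [hx2, hx3] at h1
        rw [Real.exp_neg, inv_mul_le_iff₀ (Real.exp_pos s)] at h1
        nlinarith [h1]
      · intro H x hx1
        have hs : 0 ≤ ∑ ℓ, x ℓ := Finset.sum_nonneg fun ℓ _ => hx1 ℓ
        have hcs := cs_bound b x hx1
        have h1 := H _ hs
        have h2 : (1 + a * h) ^ 2 + h * (∑ ℓ, b ℓ * Real.sqrt (x ℓ)) ^ 2 ≤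
            Real.exp (∑ ℓ, x ℓ) := by nlinarith
        calc Real.exp (-∑ ℓ, x ℓ) *
              ((1 + a * h) ^ 2 + h * (∑ ℓ, b ℓ * Real.sqrt (x ℓ)) ^ 2)
            ≤ Real.exp (-∑ ℓ, x ℓ) * Real.exp (∑ ℓ, x ℓ) :=
              mul_le_mul_of_nonneg_left h2 (Real.exp_pos _).le
          _ = 1 := by rw [← Real.exp_add]; norm_num
    have main : ∀ h : ℝ, 0 < h →
        ((∀ x : Fin d → ℝ, (∀ ℓ, 0 ≤ x ℓ) →
            Real.exp (-∑ ℓ, x ℓ) *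
              ((1 + a * h) ^ 2 + h * (∑ ℓ, b ℓ * Real.sqrt (x ℓ)) ^ 2) ≤ 1) ↔
          SpredVN p (B ^ 2 * h)) := by
      intro h hh
      have hu : 0 < B ^ 2 * h := by positivity
      have hceq : (1 + a * h) = 1 - p * (B ^ 2 * h) := by
        rw [hpdef]; field_simp; ring
      have hSp : SpredVN p (B ^ 2 * h) ↔
          ((B ^ 2 * h ≤ (1 + a * h) ^ 2 ∧ (1 + a * h) ^ 2 ≤ 1) ∨
            ((1 + a * h) ^ 2 < B ^ 2 * h ∧
              (B ^ 2 * h) * Real.exp ((1 + a * h) ^ 2 / (B ^ 2 * h) - 1) ≤ 1)) := by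
        unfold SpredVN
        rw [← hceq]
      rw [hSp]
      exact (bridge h hh).trans (scalarL _ _ (sq_nonneg _) hu)
    rcases lt_or_eq_of_le ha with han | haz
    · -- a < 0
      have hp : 0 < p := div_pos (by linarith) hB2
      obtain ⟨ub, hub1, hub2, hubiff, _, _⟩ := part1 p hp hlt
      refine ⟨ub / B ^ 2, ?_, ?_, ?_⟩
      · gcongr
      · intro _
        rw [div_lt_iff₀ hB2]
        calc ub < 2 / p := hub2
          _ = -2 / a * B ^ 2 := by
            rw [hpdef]
            field_simp
      · intro h hh
        rw [main h hh, hubiff _ (by positivity), le_div_iff₀ hB2, mul_comm]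
    · -- a = 0
      have hp0 : p = 0 := by rw [hpdef, haz]; simp
      refine ⟨1 / B ^ 2, le_rfl, by intro h0; linarith, ?_⟩
      intro h hh
      rw [main h hh, hp0, spred_zero _ (by positivity), le_div_iff₀ hB2, mul_comm]
end
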